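/- arXiv:1909.04462 — 2 statements merged into one kernel-verified Lean document; each statement's English description precedes it below -/
import Mathlib

section
/- Let F be a field of characteristic 2, ζ ∈ F a primitive n-th root of unity with n odd, and suppose the minimal polynomial of ζ over F_2 has degree t. Let S be a set of positive integers all ≤ n. If u, v : S → {0,1} satisfy ∑_{j∈S} u_j · j ≤ t−1 and ∑_{j∈S} v_j · j ≤ t−1, and ∏_{j∈S} (ζ^j + 1)^{u_j} = ∏_{j∈S} (ζ^j + 1)^{v_j}, then u = v. -/
open Polynomial Finset

/-- Coefficient of the minimal positive exponent in `∏ (X^j + 1)`. -/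
lemma coeff_prod_min (A : Finset ℕ) (k : ℕ) (hk0 : 0 < k)
    (hmin : ∀ j ∈ A, k ≤ j) :
    (∏ j ∈ A, ((X : (ZMod 2)[X]) ^ j + 1)).coeff k = if k ∈ A then 1 else 0 := by
  rw [Finset.prod_add]
  simp only [Finset.prod_const_one, mul_one]
  rw [Polynomial.finset_sum_coeff]
  have hXp : ∀ b : Finset ℕ, ∏ i ∈ b, (Polynomial.X : (ZMod 2)[X]) ^ i = X ^ (∑ i ∈ b, i) := by
    intro b
    rw [← Finset.prod_pow_eq_pow_sum]
  simp only [hXp, Polynomial.coeff_X_pow]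
  have hkey : ∀ s ∈ A.powerset, (∑ i ∈ s, i = k) ↔ (k ∈ A ∧ s = {k}) := by
    intro s hs
    rw [Finset.mem_powerset] at hs
    constructor
    · intro hsum
      have hne : s.Nonempty := by
        rcases Finset.eq_empty_or_nonempty s with h | h
        · simp [h] at hsum; omega
        · exact h
      have hall : ∀ a ∈ s, a = k := by
        intro a ha
        have h1 : a ≤ ∑ i ∈ s, i :=
          Finset.single_le_sum (f := fun i => i) (fun i _ => Nat.zero_le i) ha
        have h2 : k ≤ a := hmin a (hs ha)
        omega
      obtain ⟨a, ha⟩ := hne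
      have hka : k ∈ s := hall a ha ▸ ha
      refine ⟨hs hka, ?_⟩
      apply Finset.eq_singleton_iff_unique_mem.mpr ⟨hka, fun b hb => hall b hb⟩
    · rintro ⟨-, rfl⟩
      simp
  by_cases hkA : k ∈ A
  · rw [Finset.sum_eq_single_of_mem ({k} : Finset ℕ)]
    · simp [hkA]
    · simpa using Finset.singleton_subset_iff.mpr hkA
    · intro s hs hne
      rw [if_neg]
      intro h
      exact hne (((hkey s hs).mp h.symm).2)
  · rw [if_neg hkA, Finset.sum_eq_zero]
    intro s hs
    rw [if_neg]
    intro h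
    exact hkA ((hkey s hs).mp h.symm).1

lemma prod_eq_false (A B : Finset ℕ) (k : ℕ) (hk0 : 0 < k) (hkA : k ∈ A) (hkB : k ∉ B)
    (hminA : ∀ j ∈ A, k ≤ j) (hminB : ∀ j ∈ B, k ≤ j)
    (h : ∏ j ∈ A, ((X : (ZMod 2)[X]) ^ j + 1) = ∏ j ∈ B, (X ^ j + 1)) : False := by
  have h1 := coeff_prod_min A k hk0 hminA
  have h2 := coeff_prod_min B k hk0 hminB
  rw [h, h2, if_pos hkA, if_neg hkB] at h1
  simp at h1

lemma eq_of_prod_eq (A B : Finset ℕ) (hA : ∀ j ∈ A, 0 < j) (hB : ∀ j ∈ B, 0 < j)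
    (hd : Disjoint A B)
    (h : ∏ j ∈ A, ((X : (ZMod 2)[X]) ^ j + 1) = ∏ j ∈ B, (X ^ j + 1)) :
    A = ∅ ∧ B = ∅ := by
  by_contra hc
  have hne : (A ∪ B).Nonempty := by
    rcases Finset.eq_empty_or_nonempty A with hA' | hA'
    · rcases Finset.eq_empty_or_nonempty B with hB' | hB'
      · exact absurd ⟨hA', hB'⟩ hc
      · exact hB'.mono Finset.subset_union_right
    · exact hA'.mono Finset.subset_union_left
  set k := (A ∪ B).min' hne with hk
  have hkmem : k ∈ A ∪ B := Finset.min'_mem _ _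
  have hminA : ∀ j ∈ A, k ≤ j := fun j hj =>
    Finset.min'_le _ _ (Finset.mem_union_left _ hj)
  have hminB : ∀ j ∈ B, k ≤ j := fun j hj =>
    Finset.min'_le _ _ (Finset.mem_union_right _ hj)
  rcases Finset.mem_union.mp hkmem with hkA | hkB
  · exact prod_eq_false A B k (hA k hkA) hkA
      (fun hkB => (Finset.disjoint_left.mp hd) hkA hkB) hminA hminB h
  · exact prod_eq_false B A k (hB k hkB) hkB
      (fun hkA => (Finset.disjoint_left.mp hd) hkA hkB) hminB hminA h.symm

theorem stmt_2 (F : Type*) [Field F] [CharP F 2] [Algebra (ZMod 2) F]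
    (n : ℕ) (hn : Odd n) (ζ : F) (hζ : IsPrimitiveRoot ζ n)
    (t : ℕ) (ht : (minpoly (ZMod 2) ζ).natDegree = t)
    (S : Finset ℕ) (hS : ∀ j ∈ S, 0 < j ∧ j ≤ n)
    (u v : ℕ → ℕ) (hu1 : ∀ j, u j ≤ 1) (hv1 : ∀ j, v j ≤ 1)
    (hu : ∑ j ∈ S, u j * j ≤ t - 1) (hv : ∑ j ∈ S, v j * j ≤ t - 1)
    (heq : ∏ j ∈ S, (ζ ^ j + 1) ^ u j = ∏ j ∈ S, (ζ ^ j + 1) ^ v j) :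
    ∀ j ∈ S, u j = v j := by
  have hn0 : 0 < n := hn.pos
  -- ζ is integral over ZMod 2
  have hint : IsIntegral (ZMod 2) ζ := by
    refine ⟨X ^ n - C 1, monic_X_pow_sub_C (1 : ZMod 2) hn0.ne', ?_⟩
    simp [hζ.pow_eq_one]
  have ht1 : 1 ≤ t := ht ▸ minpoly.natDegree_pos hint
  -- polynomials
  set P : (ZMod 2)[X] := ∏ j ∈ S, (X ^ j + 1) ^ u j with hP
  set Q : (ZMod 2)[X] := ∏ j ∈ S, (X ^ j + 1) ^ v j with hQ
  have hevP : (aeval ζ) P = ∏ j ∈ S, (ζ ^ j + 1) ^ u j := by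
    rw [hP, map_prod]; simp
  have hevQ : (aeval ζ) Q = ∏ j ∈ S, (ζ ^ j + 1) ^ v j := by
    rw [hQ, map_prod]; simp
  have hdegfac : ∀ (w : ℕ → ℕ), ∀ j ∈ S, (((X : (ZMod 2)[X]) ^ j + 1) ^ w j).natDegree = w j * j := by
    intro w j hj
    rw [Polynomial.natDegree_pow]
    congr 1
    have : ((X : (ZMod 2)[X]) ^ j + 1) = X ^ j + C 1 := by simp
    rw [this, Polynomial.natDegree_X_pow_add_C]
  have hdegP : P.natDegree ≤ t - 1 := by
    refine le_trans (Polynomial.natDegree_prod_le _ _) ?_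
    calc ∑ j ∈ S, (((X : (ZMod 2)[X]) ^ j + 1) ^ u j).natDegree
        = ∑ j ∈ S, u j * j := Finset.sum_congr rfl (hdegfac u)
      _ ≤ t - 1 := hu
  have hdegQ : Q.natDegree ≤ t - 1 := by
    refine le_trans (Polynomial.natDegree_prod_le _ _) ?_
    calc ∑ j ∈ S, (((X : (ZMod 2)[X]) ^ j + 1) ^ v j).natDegree
        = ∑ j ∈ S, v j * j := Finset.sum_congr rfl (hdegfac v)
      _ ≤ t - 1 := hv
  -- minpoly divides P - Q, so P = Q
  have hdvd : minpoly (ZMod 2) ζ ∣ P - Q := by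
    apply minpoly.dvd
    rw [map_sub, hevP, hevQ, heq, sub_self]
  have hPQ : P = Q := by
    have hlt : (P - Q).natDegree < (minpoly (ZMod 2) ζ).natDegree := by
      rw [ht]
      have := Polynomial.natDegree_sub_le P Q
      omega
    have := Polynomial.eq_zero_of_dvd_of_natDegree_lt hdvd hlt
    linear_combination (norm := ring_nf) this
  -- rewrite as products over filters
  classical
  set A : Finset ℕ := S.filter (fun j => u j = 1) with hA
  set B : Finset ℕ := S.filter (fun j => v j = 1) with hB
  have hprodA : P = ∏ j ∈ A, ((X : (ZMod 2)[X]) ^ j + 1) := by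
    rw [hP, hA, Finset.prod_filter]
    apply Finset.prod_congr rfl
    intro j hj
    have := hu1 j
    interval_cases (u j) <;> simp
  have hprodB : Q = ∏ j ∈ B, ((X : (ZMod 2)[X]) ^ j + 1) := by
    rw [hQ, hB, Finset.prod_filter]
    apply Finset.prod_congr rfl
    intro j hj
    have := hv1 j
    interval_cases (v j) <;> simp
  -- cancel common factors
  have hABeq : A = B := by
    have hsplitA : ∏ j ∈ A, ((X : (ZMod 2)[X]) ^ j + 1)
        = (∏ j ∈ A \ B, (X ^ j + 1)) * ∏ j ∈ A ∩ B, (X ^ j + 1) := by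
      rw [← Finset.prod_union (Finset.disjoint_sdiff_inter A B), Finset.sdiff_union_inter]
    have hsplitB : ∏ j ∈ B, ((X : (ZMod 2)[X]) ^ j + 1)
        = (∏ j ∈ B \ A, (X ^ j + 1)) * ∏ j ∈ A ∩ B, (X ^ j + 1) := by
      rw [Finset.inter_comm,
        ← Finset.prod_union (Finset.disjoint_sdiff_inter B A), Finset.sdiff_union_inter]
    have hcancel : ∏ j ∈ A \ B, ((X : (ZMod 2)[X]) ^ j + 1)
        = ∏ j ∈ B \ A, (X ^ j + 1) := by
      have h0 : (∏ j ∈ A ∩ B, ((X : (ZMod 2)[X]) ^ j + 1)) ≠ 0 := by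
        apply Finset.prod_ne_zero_iff.mpr
        intro j hj
        intro habs
        have : ((X : (ZMod 2)[X]) ^ j + 1).natDegree = j := by
          have : ((X : (ZMod 2)[X]) ^ j + 1) = X ^ j + C 1 := by simp
          rw [this, Polynomial.natDegree_X_pow_add_C]
        rw [habs] at this
        simp at this
        have hjS : j ∈ S := (Finset.mem_filter.mp (Finset.mem_inter.mp hj).1).1
        have := (hS j hjS).1
        omega
      have := hprodA ▸ hprodB ▸ hPQ
      rw [hsplitA, hsplitB] at this
      exact mul_right_cancel₀ h0 this
    have hpos : ∀ (C : Finset ℕ), C ⊆ S → ∀ j ∈ C, 0 < j := by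
      intro C hC j hj; exact (hS j (hC hj)).1
    have hd : Disjoint (A \ B) (B \ A) := disjoint_sdiff_sdiff
    obtain ⟨h1, h2⟩ := eq_of_prod_eq (A \ B) (B \ A)
      (hpos _ ((Finset.sdiff_subset).trans (Finset.filter_subset _ _)))
      (hpos _ ((Finset.sdiff_subset).trans (Finset.filter_subset _ _)))
      hd hcancel
    have := Finset.sdiff_eq_empty_iff_subset.mp h1
    have := Finset.sdiff_eq_empty_iff_subset.mp h2
    exact Finset.Subset.antisymm ‹A ⊆ B› ‹B ⊆ A›
  intro j hj
  have hu' := hu1 j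
  have hv' := hv1 j
  have hiff : (u j = 1) ↔ (v j = 1) := by
    constructor
    · intro h
      have : j ∈ A := Finset.mem_filter.mpr ⟨hj, h⟩
      rw [hABeq] at this
      exact (Finset.mem_filter.mp this).2
    · intro h
      have : j ∈ B := Finset.mem_filter.mpr ⟨hj, h⟩
      rw [← hABeq] at this
      exact (Finset.mem_filter.mp this).2
  omega
end

section
/- Let S be a finite set of positive integers and u, v : S → {0,1} two distinct functions. Let H = { j ∈ S : u_j = 1, v_j = 0 } and K = { j ∈ S : u_j = 0, v_j = 1 }. If ∏_{j∈S}(X^j+1)^{u_j} = ∏_{j∈S}(X^j+1)^{v_j} in F_2[X], then ∏_{h∈H}(X^h+1) = ∏_{k∈K}(X^k+1) with H, K disjoint and not both empty, which is a contradiction; hence the two products are distinct polynomials. -/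
open Polynomial

lemma aux_coeff_min (T : Finset ℕ) (e : ℕ) (he : 0 < e) (hle : ∀ j ∈ T, e ≤ j) :
    (∏ j ∈ T, ((X : Polynomial (ZMod 2)) ^ j + 1)).coeff e = if e ∈ T then 1 else 0 := by
  have h1 : ∏ j ∈ T, ((X : Polynomial (ZMod 2)) ^ j + 1)
      = ∑ A ∈ T.powerset, X ^ (∑ j ∈ A, j) := by
    rw [Finset.prod_add]
    refine Finset.sum_congr rfl fun A hA => ?_
    have := Finset.prod_pow_eq_pow_sum A (fun j => j) (X : Polynomial (ZMod 2))
    simpa using this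
  rw [h1, finset_sum_coeff]
  have h2 : ∀ A ∈ T.powerset, ((X : Polynomial (ZMod 2)) ^ (∑ j ∈ A, j)).coeff e
      = if e = (∑ j ∈ A, j) then 1 else 0 := fun A _ => coeff_X_pow _ _
  rw [Finset.sum_congr rfl h2, ← Finset.sum_filter]
  have h3 : (T.powerset.filter (fun A => e = ∑ j ∈ A, j)) = if e ∈ T then {{e}} else ∅ := by
    ext A
    simp only [Finset.mem_filter, Finset.mem_powerset]
    constructor
    · rintro ⟨hsub, hsum⟩
      have hne : A.Nonempty := by
        rcases A.eq_empty_or_nonempty with rfl | h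
        · simp at hsum; omega
        · exact h
      obtain ⟨a, ha⟩ := hne
      have hae : e ≤ a := hle a (hsub ha)
      have hale : a ≤ ∑ j ∈ A, j := Finset.single_le_sum (fun i _ => Nat.zero_le i) ha
      have haeq : a = e := by omega
      have hA : A = {a} := by
        by_contra hA
        obtain ⟨b, hb, hba⟩ : ∃ b ∈ A, b ≠ a := by
          by_contra h
          push_neg at h
          exact hA (Finset.eq_singleton_iff_unique_mem.mpr ⟨ha, h⟩)
        have hbe : e ≤ b := hle b (hsub hb)
        have : a + b ≤ ∑ j ∈ A, j := Finset.add_le_sum (fun i _ => Nat.zero_le i) ha hb hba.symm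
        omega
      have heT : e ∈ T := haeq ▸ hsub ha
      rw [if_pos heT]
      simp [hA, haeq]
    · intro hA
      by_cases heT : e ∈ T
      · rw [if_pos heT] at hA
        simp only [Finset.mem_singleton] at hA
        subst hA
        simp [heT]
      · rw [if_neg heT] at hA
        simp at hA
  rw [h3]
  by_cases heT : e ∈ T <;> simp [heT]

theorem stmt_14 (S : Finset ℕ) (hS : ∀ j ∈ S, 0 < j)
    (u v : ℕ → ℕ) (hu : ∀ j, u j ≤ 1) (hv : ∀ j, v j ≤ 1)
    (hne : ∃ j ∈ S, u j ≠ v j) :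
    ∏ j ∈ S, ((X : Polynomial (ZMod 2)) ^ j + 1) ^ u j ≠
      ∏ j ∈ S, ((X : Polynomial (ZMod 2)) ^ j + 1) ^ v j := by
  intro heq
  set A := S.filter (fun j => u j = 1) with hA
  set B := S.filter (fun j => v j = 1) with hB
  have hprod : ∀ (w : ℕ → ℕ), (∀ j, w j ≤ 1) →
      ∏ j ∈ S, ((X : Polynomial (ZMod 2)) ^ j + 1) ^ w j
        = ∏ j ∈ S.filter (fun j => w j = 1), ((X : Polynomial (ZMod 2)) ^ j + 1) := by
    intro w hw
    rw [Finset.prod_filter]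
    refine Finset.prod_congr rfl fun j _ => ?_
    rcases Nat.le_one_iff_eq_zero_or_eq_one.mp (hw j) with h | h <;> simp [h]
  rw [hprod u hu, hprod v hv] at heq
  -- cancel common part
  have hmonic : ∀ (T : Finset ℕ), (∀ j ∈ T, 0 < j) →
      (∏ j ∈ T, ((X : Polynomial (ZMod 2)) ^ j + 1)).Monic := by
    intro T hT
    exact monic_prod_of_monic _ _ fun j hj => by
      simpa using monic_X_pow_add_C (1 : ZMod 2) (hT j hj).ne'
  have hAS : A ⊆ S := Finset.filter_subset _ _
  have hBS : B ⊆ S := Finset.filter_subset _ _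
  have hCpos : ∀ j ∈ A ∩ B, 0 < j := fun j hj => hS j (hAS (Finset.mem_inter.mp hj).1)
  have hCne : (∏ j ∈ A ∩ B, ((X : Polynomial (ZMod 2)) ^ j + 1)) ≠ 0 :=
    (hmonic _ hCpos).ne_zero
  have hsplitA : ∏ j ∈ A, ((X : Polynomial (ZMod 2)) ^ j + 1)
      = (∏ j ∈ A \ B, ((X : Polynomial (ZMod 2)) ^ j + 1)) *
        ∏ j ∈ A ∩ B, ((X : Polynomial (ZMod 2)) ^ j + 1) := by
    rw [← Finset.prod_union (Finset.disjoint_sdiff_inter A B), Finset.sdiff_union_inter]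
  have hsplitB : ∏ j ∈ B, ((X : Polynomial (ZMod 2)) ^ j + 1)
      = (∏ j ∈ B \ A, ((X : Polynomial (ZMod 2)) ^ j + 1)) *
        ∏ j ∈ A ∩ B, ((X : Polynomial (ZMod 2)) ^ j + 1) := by
    rw [Finset.inter_comm,
      ← Finset.prod_union (Finset.disjoint_sdiff_inter B A), Finset.sdiff_union_inter]
  rw [hsplitA, hsplitB] at heq
  have hkey : ∏ j ∈ A \ B, ((X : Polynomial (ZMod 2)) ^ j + 1)
      = ∏ j ∈ B \ A, ((X : Polynomial (ZMod 2)) ^ j + 1) :=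
    mul_right_cancel₀ hCne heq
  -- the union is nonempty
  obtain ⟨j0, hj0S, hj0⟩ := hne
  have hj0U : j0 ∈ (A \ B) ∪ (B \ A) := by
    have h1 := hu j0
    have h2 := hv j0
    have hcases : (u j0 = 1 ∧ v j0 ≠ 1) ∨ (v j0 = 1 ∧ u j0 ≠ 1) := by omega
    simp only [Finset.mem_union, Finset.mem_sdiff, hA, hB, Finset.mem_filter, not_and]
    rcases hcases with ⟨h1', h2'⟩ | ⟨h1', h2'⟩
    · exact Or.inl ⟨⟨hj0S, h1'⟩, fun _ => h2'⟩
    · exact Or.inr ⟨⟨hj0S, h1'⟩, fun _ => h2'⟩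
  set U := (A \ B) ∪ (B \ A) with hU
  have hUne : U.Nonempty := ⟨j0, hj0U⟩
  set e := U.min' hUne with he
  have heU : e ∈ U := U.min'_mem hUne
  have heS : e ∈ S := by
    rcases Finset.mem_union.mp heU with h | h
    · exact hAS (Finset.mem_sdiff.mp h).1
    · exact hBS (Finset.mem_sdiff.mp h).1
  have hepos : 0 < e := hS e heS
  have hleH : ∀ j ∈ A \ B, e ≤ j := fun j hj =>
    U.min'_le j (Finset.mem_union_left _ hj)
  have hleK : ∀ j ∈ B \ A, e ≤ j := fun j hj =>
    U.min'_le j (Finset.mem_union_right _ hj)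
  have hc := congrArg (fun p => Polynomial.coeff p e) hkey
  rw [aux_coeff_min _ e hepos hleH, aux_coeff_min _ e hepos hleK] at hc
  rcases Finset.mem_union.mp heU with h | h
  · have h2 : e ∉ B \ A := by
      simp only [Finset.mem_sdiff] at h ⊢
      tauto
    rw [if_pos h, if_neg h2] at hc
    exact one_ne_zero hc
  · have h2 : e ∉ A \ B := by
      simp only [Finset.mem_sdiff] at h ⊢
      tauto
    rw [if_neg h2, if_pos h] at hc
    exact one_ne_zero hc.symm
end
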